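/- Let (a,b,c) ∈ ℝ³ with r = a²+b²+c² ≠ 0. On 𝔥(2,1)_{a,b,c} with the orthonormal metric, define the curvature R(X,Y)Z = ∇_X∇_Y Z − ∇_Y∇_X Z − ∇_{[X,Y]}Z of the Levi-Civita connection ∇ and the Ricci tensor Ric(X,Y) = Σ_{i=1}^{5} ⟨R(E_i,X)Y, E_i⟩, and analogously Ric⁺ for the torsion connection ∇⁺. Then Ric(E_m,E_n) = −(1/2) Σ_i dη(E_i,E_m)dη(E_i,E_n) + (1/4)|dη|² η(E_m)η(E_n) and Ric⁺(E_m,E_n) = −Σ_i dη(E_i,E_m)dη(E_i,E_n), where |dη|² = Σ_{i,j} dη(E_i,E_j)². Explicitly, Ric is diagonal with Ric(E_i,E_i) = −r/2 for i = 1,…,4 and Ric(E₅,E₅) = r, and Ric⁺ is diagonal with Ric⁺(E_i,E_i) = −r for i = 1,…,4 and Ric⁺(E₅,E₅) = 0. -/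
import Mathlib


noncomputable section
open Real

/-- ℝ⁵, the underlying space of the Lie algebra 𝔥(2,1)_{a,b,c}. -/
abbrev V : Type := Fin 5 → ℝ

/-- The standard (orthonormal) basis vectors E₁,…,E₅ (0-indexed). -/
def E (i : Fin 5) : V := Pi.single i 1

/-- The inner product making E₁,…,E₅ orthonormal. -/
def ip (x y : V) : ℝ := ∑ i, x i * y i

/-- The dual basis 1-forms e¹,…,e⁵ (0-indexed). -/
def e (i : Fin 5) : V → ℝ := fun x => x i

/-- The Lie bracket of 𝔥(2,1)_{a,b,c}: the only nonzero brackets of basis vectors are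
[E₁,E₂] = −aE₅, [E₃,E₄] = aE₅, [E₁,E₃] = −bE₅, [E₂,E₄] = −bE₅, [E₁,E₄] = −cE₅,
[E₂,E₃] = cE₅. -/
def br (a b c : ℝ) (x y : V) : V := fun k =>
  if k = 4 then
    -a * (x 0 * y 1 - x 1 * y 0) + a * (x 2 * y 3 - x 3 * y 2)
      - b * (x 0 * y 2 - x 2 * y 0) - b * (x 1 * y 3 - x 3 * y 1)
      - c * (x 0 * y 3 - x 3 * y 0) + c * (x 1 * y 2 - x 2 * y 1)
  else 0

/-- Chevalley–Eilenberg differential of a 1-form: dα(X,Y) = −α([X,Y]). -/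
def d1 (a b c : ℝ) (α : V → ℝ) : V → V → ℝ := fun x y => -α (br a b c x y)

/-- dη = de⁵, the Chevalley–Eilenberg differential of η = e⁵. -/
def dEta (a b c : ℝ) : V → V → ℝ := d1 a b c (e 4)

/-- Wedge product of two 1-forms. -/
def w11 (α β : V → ℝ) : V → V → ℝ := fun x y => α x * β y - α y * β x

/-- Wedge product of a 1-form and a 2-form. -/
def w12 (α : V → ℝ) (β : V → V → ℝ) : V → V → V → ℝ :=
  fun x y z => α x * β y z - α y * β x z + α z * β x y

/-- Wedge product of two 2-forms. -/
def w22 (α β : V → V → ℝ) : V → V → V → V → ℝ := fun x y z w =>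
  α x y * β z w - α x z * β y w + α x w * β y z
    + α y z * β x w - α y w * β x z + α z w * β x y

/-- The 4-form e¹∧e²∧e³∧e⁴. -/
def e1234 : V → V → V → V → ℝ := w22 (w11 (e 0) (e 1)) (w11 (e 2) (e 3))

/-- The torsion 3-form T = η∧dη. -/
def T3 (a b c : ℝ) : V → V → V → ℝ := w12 (e 4) (dEta a b c)

/-- Chevalley–Eilenberg differential of a 3-form. -/
def d3 (a b c : ℝ) (T : V → V → V → ℝ) : V → V → V → V → ℝ := fun x y z w =>
  -T (br a b c x y) z w + T (br a b c x z) y w - T (br a b c x w) y z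
    - T (br a b c y z) x w + T (br a b c y w) x z - T (br a b c z w) x y

/-- The Levi-Civita (Koszul) connection of the left-invariant metric:
2⟨∇_X Y, Z⟩ = ⟨[X,Y],Z⟩ − ⟨[Y,Z],X⟩ + ⟨[Z,X],Y⟩. -/
def nablaG (a b c : ℝ) (x y : V) : V := fun k =>
  (1 / 2) * (ip (br a b c x y) (E k) - ip (br a b c y (E k)) x + ip (br a b c (E k) x) y)

/-- The torsion connection ∇⁺: ⟨∇⁺_X Y, Z⟩ = ⟨∇_X Y, Z⟩ + ½T(X,Y,Z). -/
def nablaP (a b c : ℝ) (x y : V) : V := fun k =>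
  nablaG a b c x y k + (1 / 2) * T3 a b c x y (E k)

/-- Connection 1-forms ωⁱⱼ(X) = ⟨D_X E_j, E_i⟩ of a connection D. -/
def conn1 (D : V → V → V) (i j : Fin 5) : V → ℝ := fun x => ip (D x (E j)) (E i)

/-- Curvature 2-forms Ωⁱⱼ = dσⁱⱼ + Σ_k σⁱ_k ∧ σᵏⱼ of connection 1-forms σ. -/
def curv (a b c : ℝ) (σ : Fin 5 → Fin 5 → V → ℝ) (i j : Fin 5) : V → V → ℝ :=
  fun x y => d1 a b c (σ i j) x y + ∑ k, (σ i k x * σ k j y - σ i k y * σ k j x)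

/-- First Pontrjagin 4-form p₁ = (1/8π²) Σ_{1≤i<j≤5} Ωⁱⱼ∧Ωⁱⱼ. -/
def pont (Ω : Fin 5 → Fin 5 → V → V → ℝ) : V → V → V → V → ℝ := fun x y z w =>
  (1 / (8 * π ^ 2)) * ∑ i, ∑ j, if i < j then w22 (Ω i j) (Ω i j) x y z w else 0

/-- The endomorphism ψ: ψE₁ = −E₂, ψE₂ = E₁, ψE₃ = −E₄, ψE₄ = E₃, ψE₅ = 0. -/
def psi (x : V) : V := ![x 1, -x 0, x 3, -x 2, 0]

/-- The coefficients of the connection 1-forms σⁱⱼ = (S i j)·e⁵ of the instanton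
A_{λ,μ,τ}: σ¹₂ = −σ²₁ = −σ³₄ = σ⁴₃ = −λe⁵, σ¹₃ = −σ³₁ = σ²₄ = −σ⁴₂ = −μe⁵,
σ¹₄ = −σ⁴₁ = −σ²₃ = σ³₂ = −τe⁵, all other σⁱⱼ = 0. -/
def S (lam mu tau : ℝ) : Fin 5 → Fin 5 → ℝ :=
  ![![0, -lam, -mu, -tau, 0],
    ![lam, 0, tau, -mu, 0],
    ![mu, -tau, 0, lam, 0],
    ![tau, mu, -lam, 0, 0],
    ![0, 0, 0, 0, 0]]

/-- The connection 1-forms of the instanton A_{λ,μ,τ}. -/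
def sigmaA (lam mu tau : ℝ) (i j : Fin 5) : V → ℝ := fun x => S lam mu tau i j * e 4 x

/-- Curvature R(X,Y)Z = ∇_X∇_Y Z − ∇_Y∇_X Z − ∇_{[X,Y]}Z of a connection D. -/
def curvOp (a b c : ℝ) (D : V → V → V) (x y z : V) : V :=
  D x (D y z) - D y (D x z) - D (br a b c x y) z

/-- Ricci tensor Ric(X,Y) = Σ_i ⟨R(E_i,X)Y, E_i⟩ of a connection D. -/
def ricci (a b c : ℝ) (D : V → V → V) (x y : V) : ℝ :=
  ∑ i, ip (curvOp a b c D (E i) x y) (E i)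

/-- |dη|² = Σ_{i,j} dη(E_i,E_j)². -/
def dEtaNormSq (a b c : ℝ) : ℝ := ∑ i, ∑ j, (dEta a b c (E i) (E j)) ^ 2

lemma E_eq : (E : Fin 5 → V) = ![![1,0,0,0,0],![0,1,0,0,0],![0,0,1,0,0],![0,0,0,1,0],![0,0,0,0,1]] := by
  funext i j
  fin_cases i <;> fin_cases j <;> simp [E, Pi.single_apply, Matrix.vecHead, Matrix.vecTail]

lemma E_apply (i k : Fin 5) : E i k = if k = i then 1 else 0 := Pi.single_apply i 1 k

lemma ip_eq (x y : V) : ip x y = x 0 * y 0 + x 1 * y 1 + x 2 * y 2 + x 3 * y 3 + x 4 * y 4 := by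
  simp [ip, Fin.sum_univ_five]

def f (a b c : ℝ) (x y : V) : ℝ :=
  -a * (x 0 * y 1 - x 1 * y 0) + a * (x 2 * y 3 - x 3 * y 2)
    - b * (x 0 * y 2 - x 2 * y 0) - b * (x 1 * y 3 - x 3 * y 1)
    - c * (x 0 * y 3 - x 3 * y 0) + c * (x 1 * y 2 - x 2 * y 1)

def g (a b c : ℝ) (k : Fin 5) (x : V) : ℝ :=
  ![-(a * x 1 + b * x 2 + c * x 3),
    a * x 0 - b * x 3 + c * x 2,
    b * x 0 - c * x 1 + a * x 3,
    c * x 0 + b * x 1 - a * x 2,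
    0] k

lemma nablaG_eq (a b c : ℝ) (x y : V) : nablaG a b c x y =
    ![(1/2) * (g a b c 0 y * x 4 + g a b c 0 x * y 4),
      (1/2) * (g a b c 1 y * x 4 + g a b c 1 x * y 4),
      (1/2) * (g a b c 2 y * x 4 + g a b c 2 x * y 4),
      (1/2) * (g a b c 3 y * x 4 + g a b c 3 x * y 4),
      (1/2) * f a b c x y] := by
  funext k
  fin_cases k <;>
    simp [nablaG, ip_eq, br, E_eq, f, g, Matrix.vecHead, Matrix.vecTail] <;> ring

lemma nablaP_eq (a b c : ℝ) (x y : V) : nablaP a b c x y =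
    ![x 4 * g a b c 0 y, x 4 * g a b c 1 y, x 4 * g a b c 2 y, x 4 * g a b c 3 y, 0] := by
  funext k
  rw [nablaP, nablaG_eq]
  fin_cases k <;>
    simp [T3, w12, dEta, d1, e, br, E_eq, f, g, Matrix.vecHead, Matrix.vecTail] <;> ring

set_option maxHeartbeats 2000000 in
lemma ip_E (v : V) (i : Fin 5) : ip v (E i) = v i := by
  fin_cases i <;> simp [ip_eq, E_apply]

section comps
variable (a b c : ℝ) (x y : V)

set_option maxHeartbeats 1000000

local notation "SIMP" => 0

lemma curvG0 : curvOp a b c (nablaG a b c) (E 0) x y 0 =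
    (1/4) * (a^2+b^2+c^2) * (x 4 * y 4) - (3/4) * g a b c 0 x * g a b c 0 y := by
  simp only [curvOp, Pi.sub_apply, nablaG_eq, br, E_apply, f, g,
    Matrix.cons_val_zero, Matrix.cons_val_one, Matrix.head_cons,
    Matrix.cons_val_two, Matrix.cons_val_three, Matrix.cons_val_four, Matrix.head_fin_const,
    Matrix.tail_cons, Matrix.cons_val_fin_one, Matrix.cons_val', Matrix.empty_val',
    Matrix.vecHead, Matrix.vecTail, Function.comp_apply, Matrix.cons_val_succ,
    Fin.reduceEq, reduceIte]
  ring

lemma curvG1 : curvOp a b c (nablaG a b c) (E 1) x y 1 =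
    (1/4) * (a^2+b^2+c^2) * (x 4 * y 4) - (3/4) * g a b c 1 x * g a b c 1 y := by
  simp only [curvOp, Pi.sub_apply, nablaG_eq, br, E_apply, f, g,
    Matrix.cons_val_zero, Matrix.cons_val_one, Matrix.head_cons,
    Matrix.cons_val_two, Matrix.cons_val_three, Matrix.cons_val_four, Matrix.head_fin_const,
    Matrix.tail_cons, Matrix.cons_val_fin_one, Matrix.cons_val', Matrix.empty_val',
    Matrix.vecHead, Matrix.vecTail, Function.comp_apply, Matrix.cons_val_succ,
    Fin.reduceEq, reduceIte]
  ring

lemma curvG2 : curvOp a b c (nablaG a b c) (E 2) x y 2 =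
    (1/4) * (a^2+b^2+c^2) * (x 4 * y 4) - (3/4) * g a b c 2 x * g a b c 2 y := by
  simp only [curvOp, Pi.sub_apply, nablaG_eq, br, E_apply, f, g,
    Matrix.cons_val_zero, Matrix.cons_val_one, Matrix.head_cons,
    Matrix.cons_val_two, Matrix.cons_val_three, Matrix.cons_val_four, Matrix.head_fin_const,
    Matrix.tail_cons, Matrix.cons_val_fin_one, Matrix.cons_val', Matrix.empty_val',
    Matrix.vecHead, Matrix.vecTail, Function.comp_apply, Matrix.cons_val_succ,
    Fin.reduceEq, reduceIte]
  ring

lemma curvG3 : curvOp a b c (nablaG a b c) (E 3) x y 3 =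
    (1/4) * (a^2+b^2+c^2) * (x 4 * y 4) - (3/4) * g a b c 3 x * g a b c 3 y := by
  simp only [curvOp, Pi.sub_apply, nablaG_eq, br, E_apply, f, g,
    Matrix.cons_val_zero, Matrix.cons_val_one, Matrix.head_cons,
    Matrix.cons_val_two, Matrix.cons_val_three, Matrix.cons_val_four, Matrix.head_fin_const,
    Matrix.tail_cons, Matrix.cons_val_fin_one, Matrix.cons_val', Matrix.empty_val',
    Matrix.vecHead, Matrix.vecTail, Function.comp_apply, Matrix.cons_val_succ,
    Fin.reduceEq, reduceIte]
  ring

lemma curvG4 : curvOp a b c (nablaG a b c) (E 4) x y 4 =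
    (1/4) * (a^2+b^2+c^2) * (x 0 * y 0 + x 1 * y 1 + x 2 * y 2 + x 3 * y 3) := by
  simp only [curvOp, Pi.sub_apply, nablaG_eq, br, E_apply, f, g,
    Matrix.cons_val_zero, Matrix.cons_val_one, Matrix.head_cons,
    Matrix.cons_val_two, Matrix.cons_val_three, Matrix.cons_val_four, Matrix.head_fin_const,
    Matrix.tail_cons, Matrix.cons_val_fin_one, Matrix.cons_val', Matrix.empty_val',
    Matrix.vecHead, Matrix.vecTail, Function.comp_apply, Matrix.cons_val_succ,
    Fin.reduceEq, reduceIte]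
  ring

lemma curvP0 : curvOp a b c (nablaP a b c) (E 0) x y 0 = -(g a b c 0 x * g a b c 0 y) := by
  simp only [curvOp, Pi.sub_apply, nablaP_eq, br, E_apply, f, g,
    Matrix.cons_val_zero, Matrix.cons_val_one, Matrix.head_cons,
    Matrix.cons_val_two, Matrix.cons_val_three, Matrix.cons_val_four, Matrix.head_fin_const,
    Matrix.tail_cons, Matrix.cons_val_fin_one, Matrix.cons_val', Matrix.empty_val',
    Matrix.vecHead, Matrix.vecTail, Function.comp_apply, Matrix.cons_val_succ,
    Fin.reduceEq, reduceIte]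
  ring

lemma curvP1 : curvOp a b c (nablaP a b c) (E 1) x y 1 = -(g a b c 1 x * g a b c 1 y) := by
  simp only [curvOp, Pi.sub_apply, nablaP_eq, br, E_apply, f, g,
    Matrix.cons_val_zero, Matrix.cons_val_one, Matrix.head_cons,
    Matrix.cons_val_two, Matrix.cons_val_three, Matrix.cons_val_four, Matrix.head_fin_const,
    Matrix.tail_cons, Matrix.cons_val_fin_one, Matrix.cons_val', Matrix.empty_val',
    Matrix.vecHead, Matrix.vecTail, Function.comp_apply, Matrix.cons_val_succ,
    Fin.reduceEq, reduceIte]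
  ring

lemma curvP2 : curvOp a b c (nablaP a b c) (E 2) x y 2 = -(g a b c 2 x * g a b c 2 y) := by
  simp only [curvOp, Pi.sub_apply, nablaP_eq, br, E_apply, f, g,
    Matrix.cons_val_zero, Matrix.cons_val_one, Matrix.head_cons,
    Matrix.cons_val_two, Matrix.cons_val_three, Matrix.cons_val_four, Matrix.head_fin_const,
    Matrix.tail_cons, Matrix.cons_val_fin_one, Matrix.cons_val', Matrix.empty_val',
    Matrix.vecHead, Matrix.vecTail, Function.comp_apply, Matrix.cons_val_succ,
    Fin.reduceEq, reduceIte]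
  ring

lemma curvP3 : curvOp a b c (nablaP a b c) (E 3) x y 3 = -(g a b c 3 x * g a b c 3 y) := by
  simp only [curvOp, Pi.sub_apply, nablaP_eq, br, E_apply, f, g,
    Matrix.cons_val_zero, Matrix.cons_val_one, Matrix.head_cons,
    Matrix.cons_val_two, Matrix.cons_val_three, Matrix.cons_val_four, Matrix.head_fin_const,
    Matrix.tail_cons, Matrix.cons_val_fin_one, Matrix.cons_val', Matrix.empty_val',
    Matrix.vecHead, Matrix.vecTail, Function.comp_apply, Matrix.cons_val_succ,
    Fin.reduceEq, reduceIte]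
  ring

lemma curvP4 : curvOp a b c (nablaP a b c) (E 4) x y 4 = 0 := by
  simp only [curvOp, Pi.sub_apply, nablaP_eq, br, E_apply, f, g,
    Matrix.cons_val_zero, Matrix.cons_val_one, Matrix.head_cons,
    Matrix.cons_val_two, Matrix.cons_val_three, Matrix.cons_val_four, Matrix.head_fin_const,
    Matrix.tail_cons, Matrix.cons_val_fin_one, Matrix.cons_val', Matrix.empty_val',
    Matrix.vecHead, Matrix.vecTail, Function.comp_apply, Matrix.cons_val_succ,
    Fin.reduceEq, reduceIte]
  ring

end comps

lemma ricciG_eq (a b c : ℝ) (x y : V) :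
    ricci a b c (nablaG a b c) x y =
      -((a^2+b^2+c^2)/2) * (x 0 * y 0 + x 1 * y 1 + x 2 * y 2 + x 3 * y 3)
        + (a^2+b^2+c^2) * (x 4 * y 4) := by
  rw [ricci, Fin.sum_univ_five, ip_E, ip_E, ip_E, ip_E, ip_E,
    curvG0, curvG1, curvG2, curvG3, curvG4]
  simp only [g, Matrix.cons_val_zero, Matrix.cons_val_one, Matrix.head_cons,
    Matrix.cons_val_two, Matrix.cons_val_three, Matrix.tail_cons,
    Matrix.vecHead, Matrix.vecTail, Function.comp_apply, Matrix.cons_val_succ]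
  ring

lemma ricciP_eq (a b c : ℝ) (x y : V) :
    ricci a b c (nablaP a b c) x y =
      -(a^2+b^2+c^2) * (x 0 * y 0 + x 1 * y 1 + x 2 * y 2 + x 3 * y 3) := by
  rw [ricci, Fin.sum_univ_five, ip_E, ip_E, ip_E, ip_E, ip_E,
    curvP0, curvP1, curvP2, curvP3, curvP4]
  simp only [g, Matrix.cons_val_zero, Matrix.cons_val_one, Matrix.head_cons,
    Matrix.cons_val_two, Matrix.cons_val_three, Matrix.tail_cons,
    Matrix.vecHead, Matrix.vecTail, Function.comp_apply, Matrix.cons_val_succ]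
  ring

lemma sum_dEta (a b c : ℝ) (x y : V) :
    ∑ i, dEta a b c (E i) x * dEta a b c (E i) y =
      (a^2+b^2+c^2) * (x 0 * y 0 + x 1 * y 1 + x 2 * y 2 + x 3 * y 3) := by
  simp only [dEta, d1, e, br, E_apply, Fin.sum_univ_five, Fin.reduceEq, reduceIte]
  ring

lemma dEtaNormSq_eq (a b c : ℝ) : dEtaNormSq a b c = 4 * (a^2+b^2+c^2) := by
  simp only [dEtaNormSq, dEta, d1, e, br, E_apply, Fin.sum_univ_five, Fin.reduceEq, reduceIte]
  ring
/-- on 𝔥(2,1)_{a,b,c} with r = a²+b²+c² ≠ 0, the Ricci tensors of the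
Levi-Civita connection ∇ and the torsion connection ∇⁺ are
Ric(E_m,E_n) = −(1/2)Σ_i dη(E_i,E_m)dη(E_i,E_n) + (1/4)|dη|²η(E_m)η(E_n) and
Ric⁺(E_m,E_n) = −Σ_i dη(E_i,E_m)dη(E_i,E_n); explicitly, both are diagonal with
Ric(E_i,E_i) = −r/2 (i = 1,…,4), Ric(E₅,E₅) = r, Ric⁺(E_i,E_i) = −r (i = 1,…,4),
Ric⁺(E₅,E₅) = 0. -/
theorem ricci_tensors (a b c : ℝ) (h : a ^ 2 + b ^ 2 + c ^ 2 ≠ 0) :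
    let r := a ^ 2 + b ^ 2 + c ^ 2
    (∀ m n : Fin 5,
      ricci a b c (nablaG a b c) (E m) (E n) =
        -(1 / 2) * (∑ i, dEta a b c (E i) (E m) * dEta a b c (E i) (E n))
          + (1 / 4) * dEtaNormSq a b c * e 4 (E m) * e 4 (E n))
    ∧ (∀ m n : Fin 5,
        ricci a b c (nablaP a b c) (E m) (E n) =
          -(∑ i, dEta a b c (E i) (E m) * dEta a b c (E i) (E n)))
    ∧ (∀ i : Fin 5, i ≠ 4 → ricci a b c (nablaG a b c) (E i) (E i) = -r / 2)
    ∧ ricci a b c (nablaG a b c) (E 4) (E 4) = r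
    ∧ (∀ i : Fin 5, i ≠ 4 → ricci a b c (nablaP a b c) (E i) (E i) = -r)
    ∧ ricci a b c (nablaP a b c) (E 4) (E 4) = 0
    ∧ (∀ m n : Fin 5, m ≠ n →
        ricci a b c (nablaG a b c) (E m) (E n) = 0
          ∧ ricci a b c (nablaP a b c) (E m) (E n) = 0) := by
  intro r
  have hG : ∀ m n : Fin 5, ricci a b c (nablaG a b c) (E m) (E n) =
      -(r/2) * (E m 0 * E n 0 + E m 1 * E n 1 + E m 2 * E n 2 + E m 3 * E n 3)
        + r * (E m 4 * E n 4) := fun m n => by rw [ricciG_eq]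
  have hP : ∀ m n : Fin 5, ricci a b c (nablaP a b c) (E m) (E n) =
      -r * (E m 0 * E n 0 + E m 1 * E n 1 + E m 2 * E n 2 + E m 3 * E n 3) :=
    fun m n => ricciP_eq a b c (E m) (E n)
  refine ⟨fun m n => ?_, fun m n => ?_, fun i hi => ?_, ?_, fun i hi => ?_, ?_, fun m n hmn => ?_⟩
  · rw [hG, sum_dEta, dEtaNormSq_eq]
    show _ = _ + 1 / 4 * (4 * r) * E m 4 * E n 4
    ring
  · rw [hP, sum_dEta]; ring
  · rw [hG i i]; fin_cases i <;> first | exact absurd rfl (by assumption) | (simp +decide [E_apply]; try ring)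
  · rw [hG 4 4]; simp +decide [E_apply]
  · rw [hP i i]; fin_cases i <;> first | exact absurd rfl (by assumption) | (simp +decide [E_apply]; try ring)
  · rw [hP 4 4]; simp +decide [E_apply]
  · rw [hG m n, hP m n]
    fin_cases m <;> fin_cases n <;> simp +decide [E_apply] <;> simp_all
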